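/- Let k = 6/5, f = f_k with f_k(z) = ((1+k)/2 − z)^((1+k)/(2k)) · (z + (k−1)/2)^((k−1)/(2k)), and β = 1 + f(0). Let G = (V,E) be any finite simple graph with any arrival order of its vertices, and run PrimalDual with allocation function f and constant β, producing edge values x : E → ℝ. Then x is a fractional matching of G (x_e ≥ 0 for all e, and Σ_{e incident to v} x_e ≤ 1 for every v ∈ V), and for every fractional matching x* of G, Σ_{e∈E} x_e ≥ 0.526 · Σ_{e∈E} x*_e. -/

import Mathlib

open Finset

/-- The water level chosen by `GreedyAllocation` with allocation function `f`:
the supremum of `t ∈ [0,1]` such that raising all potentials in `S` up to `t`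
costs at most `f t`. -/
noncomputable def waterLevel {ι : Type*} (f : ℝ → ℝ) (S : Finset ι) (y : ι → ℝ) : ℝ :=
  sSup {t ∈ Set.Icc (0:ℝ) 1 | ∑ u ∈ S, max (t - y u) 0 ≤ f t}

/-- The previously arrived neighbors of vertex `i` (vertices arrive in the
order `0, 1, …, n-1`; `E` is the adjacency predicate of the graph). -/
def neighborsBefore {n : ℕ} (E : Fin n → Fin n → Bool) (i : Fin n) : Finset (Fin n) :=
  Finset.univ.filter fun j => j < i ∧ E j i = true

/-- Potentials maintained by `GreedyAllocation` with allocation function `f`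
after `i` vertices have been processed. When vertex `i` arrives, the water
level `w` is computed over its previously arrived neighbors; each such
neighbor's potential is raised to at least `w`, and vertex `i` receives
potential `1 - w`. -/
noncomputable def greedyPotential (f : ℝ → ℝ) {n : ℕ} (E : Fin n → Fin n → Bool) :
    ℕ → Fin n → ℝ
  | 0 => fun _ => 0
  | (i + 1) => fun v =>
      if h : i < n then
        let vi : Fin n := ⟨i, h⟩
        let w := waterLevel f (neighborsBefore E vi) (greedyPotential f E i)
        if v = vi then 1 - w
        else if v ∈ neighborsBefore E vi then max (greedyPotential f E i v) w
        else greedyPotential f E i v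
      else greedyPotential f E i v

/-- The water level used when processing vertex `i`. -/
noncomputable def stepLevel (f : ℝ → ℝ) {n : ℕ} (E : Fin n → Fin n → Bool) (i : Fin n) : ℝ :=
  waterLevel f (neighborsBefore E i) (greedyPotential f E i.val)

/-- The edge values set by the `PrimalDual` algorithm: when vertex `i` arrives,
for each previously arrived neighbor `j` the edge `(j,i)` receives value
`(max(w_i - y_j, 0)/β)·(1 + (1 - w_i)/f(w_i))`, using the potentials before
updating; all other pairs get `0`. -/
noncomputable def pdEdge (f : ℝ → ℝ) (β : ℝ) {n : ℕ} (E : Fin n → Fin n → Bool)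
    (j i : Fin n) : ℝ :=
  if j < i ∧ E j i = true then
    (max (stepLevel f E i - greedyPotential f E i.val j) 0 / β) *
      (1 + (1 - stepLevel f E i) / f (stepLevel f E i))
  else 0

noncomputable def f₀ (z : ℝ) : ℝ := (11/10 - z) ^ ((11:ℝ)/12) * (z + 1/10) ^ ((1:ℝ)/12)

lemma f₀_cont : Continuous f₀ := by
  apply Continuous.mul
  · exact (Real.continuous_rpow_const (by norm_num)).comp (by continuity)
  · exact (Real.continuous_rpow_const (by norm_num)).comp (by continuity)

lemma f₀_pos {z : ℝ} (h0 : 0 ≤ z) (h1 : z ≤ 1) : 0 < f₀ z := by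
  apply mul_pos
  · exact Real.rpow_pos_of_pos (by linarith) _
  · exact Real.rpow_pos_of_pos (by linarith) _

lemma f₀_one_sub (z : ℝ) : f₀ (1 - z) = (z + 1/10) ^ ((11:ℝ)/12) * (11/10 - z) ^ ((1:ℝ)/12) := by
  unfold f₀
  congr 2 <;> ring

lemma f₀_hasDeriv {x : ℝ} (h0 : 0 < x) (h1 : x < 1) :
    HasDerivAt f₀ (-(x / f₀ (1 - x))) x := by
  have hb1 : (0:ℝ) < 11/10 - x := by linarith
  have hb2 : (0:ℝ) < x + 1/10 := by linarith
  have d1 : HasDerivAt (fun z : ℝ => (11/10 - z) ^ ((11:ℝ)/12))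
      ((-1) * ((11:ℝ)/12) * (11/10 - x) ^ ((11:ℝ)/12 - 1)) x :=
    (HasDerivAt.const_sub _ (hasDerivAt_id x)).rpow_const (Or.inl hb1.ne')
  have d2 : HasDerivAt (fun z : ℝ => (z + 1/10) ^ ((1:ℝ)/12))
      (1 * ((1:ℝ)/12) * (x + 1/10) ^ ((1:ℝ)/12 - 1)) x :=
    ((hasDerivAt_id x).add_const _).rpow_const (Or.inl hb2.ne')
  have this := d1.mul d2
  convert this using 1
  · rfl
  · rfl
  · rfl
  have hF : f₀ (1 - x) = (x + 1/10) ^ ((11:ℝ)/12) * (11/10 - x) ^ ((1:ℝ)/12) := f₀_one_sub x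
  have hFpos : 0 < f₀ (1 - x) := f₀_pos (by linarith) (by linarith)
  have e1 : (11/10 - x) ^ ((11:ℝ)/12 - 1) * (11/10 - x) ^ ((1:ℝ)/12) = 1 := by
    rw [← Real.rpow_add hb1]; norm_num
  have e2 : (x + 1/10) ^ ((1:ℝ)/12) * (x + 1/10) ^ ((11:ℝ)/12) = x + 1/10 := by
    rw [← Real.rpow_add hb2]; norm_num
  have e3 : (11/10 - x) ^ ((11:ℝ)/12) * (11/10 - x) ^ ((1:ℝ)/12) = 11/10 - x := by
    rw [← Real.rpow_add hb1]; norm_num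
  have e4 : (x + 1/10) ^ ((1:ℝ)/12 - 1) * (x + 1/10) ^ ((11:ℝ)/12) = 1 := by
    rw [← Real.rpow_add hb2]; norm_num
  have key : (-1 * ((11:ℝ)/12) * (11/10 - x) ^ ((11:ℝ)/12 - 1) * (x + 1/10) ^ ((1:ℝ)/12) +
      (11/10 - x) ^ ((11:ℝ)/12) * (1 * ((1:ℝ)/12) * (x + 1/10) ^ ((1:ℝ)/12 - 1))) *
      ((x + 1/10) ^ ((11:ℝ)/12) * (11/10 - x) ^ ((1:ℝ)/12)) = -x := by
    calc (-1 * ((11:ℝ)/12) * (11/10 - x) ^ ((11:ℝ)/12 - 1) * (x + 1/10) ^ ((1:ℝ)/12) +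
        (11/10 - x) ^ ((11:ℝ)/12) * (1 * ((1:ℝ)/12) * (x + 1/10) ^ ((1:ℝ)/12 - 1))) *
        ((x + 1/10) ^ ((11:ℝ)/12) * (11/10 - x) ^ ((1:ℝ)/12))
        = -1 * (11/12) * ((11/10 - x) ^ ((11:ℝ)/12 - 1) * (11/10 - x) ^ ((1:ℝ)/12)) *
            ((x + 1/10) ^ ((1:ℝ)/12) * (x + 1/10) ^ ((11:ℝ)/12)) +
          (1/12) * ((11/10 - x) ^ ((11:ℝ)/12) * (11/10 - x) ^ ((1:ℝ)/12)) *
            ((x + 1/10) ^ ((1:ℝ)/12 - 1) * (x + 1/10) ^ ((11:ℝ)/12)) := by ring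
      _ = -1 * (11/12) * 1 * (x + 1/10) + (1/12) * (11/10 - x) * 1 := by rw [e1, e2, e3, e4]
      _ = -x := by ring
  have hprod : (0:ℝ) < (x + 1/10) ^ ((11:ℝ)/12) * (11/10 - x) ^ ((1:ℝ)/12) := hF ▸ hFpos
  rw [hF, ← neg_div, eq_comm, eq_div_iff hprod.ne']
  linarith [key]

lemma hmono₀ {z1 z2 : ℝ} (h0 : 0 ≤ z1) (h12 : z1 ≤ z2) (h1 : z2 ≤ 1) :
    z1 / f₀ (1 - z1) ≤ z2 / f₀ (1 - z2) := by
  have p1 : 0 < f₀ (1 - z1) := f₀_pos (by linarith) (by linarith)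
  have p2 : 0 < f₀ (1 - z2) := f₀_pos (by linarith) (by linarith)
  rw [div_le_div_iff₀ p1 p2, f₀_one_sub, f₀_one_sub]
  have hb1 : (0:ℝ) < z1 + 1/10 := by linarith
  have hb2 : (0:ℝ) < z2 + 1/10 := by linarith
  -- z1 * ((z2+1/10)^(11/12) * (11/10-z2)^(1/12)) ≤ z2 * ((z1+1/10)^(11/12) * (11/10-z1)^(1/12))
  have hA : (11/10 - z2 : ℝ) ^ ((1:ℝ)/12) ≤ (11/10 - z1) ^ ((1:ℝ)/12) :=
    Real.rpow_le_rpow (by linarith) (by linarith) (by norm_num)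
  have hB : z1 * (z2 + 1/10) ^ ((11:ℝ)/12) ≤ z2 * (z1 + 1/10) ^ ((11:ℝ)/12) := by
    have hr : (z2 + 1/10) ^ ((11:ℝ)/12) = ((z2 + 1/10)/(z1 + 1/10)) ^ ((11:ℝ)/12) * (z1 + 1/10) ^ ((11:ℝ)/12) := by
      rw [← Real.mul_rpow (by positivity) (by positivity), div_mul_cancel₀ _ hb1.ne']
    rw [hr, ← mul_assoc]
    have hratio : (1:ℝ) ≤ (z2 + 1/10)/(z1 + 1/10) := by
      rw [le_div_iff₀ hb1]; linarith
    have hle : ((z2 + 1/10)/(z1 + 1/10)) ^ ((11:ℝ)/12) ≤ (z2 + 1/10)/(z1 + 1/10) := by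
      nth_rewrite 2 [← Real.rpow_one ((z2 + 1/10)/(z1 + 1/10))]
      exact Real.rpow_le_rpow_of_exponent_le hratio (by norm_num)
    have h2 : z1 * ((z2 + 1/10)/(z1 + 1/10)) ≤ z2 := by
      rw [mul_div_assoc', div_le_iff₀ hb1]
      nlinarith
    calc z1 * ((z2 + 1/10)/(z1 + 1/10)) ^ ((11:ℝ)/12) * (z1 + 1/10) ^ ((11:ℝ)/12)
        ≤ z1 * ((z2 + 1/10)/(z1 + 1/10)) * (z1 + 1/10) ^ ((11:ℝ)/12) := by
          apply mul_le_mul_of_nonneg_right _ (by positivity)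
          exact mul_le_mul_of_nonneg_left hle h0
      _ ≤ z2 * (z1 + 1/10) ^ ((11:ℝ)/12) := by
          apply mul_le_mul_of_nonneg_right h2 (by positivity)
  calc z1 * ((z2 + 1/10) ^ ((11:ℝ)/12) * (11/10 - z2) ^ ((1:ℝ)/12))
      = z1 * (z2 + 1/10) ^ ((11:ℝ)/12) * (11/10 - z2) ^ ((1:ℝ)/12) := by ring
    _ ≤ z2 * (z1 + 1/10) ^ ((11:ℝ)/12) * (11/10 - z1) ^ ((1:ℝ)/12) := by
        exact mul_le_mul hB hA (Real.rpow_nonneg (by linarith) _)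
          (mul_nonneg (by linarith) (Real.rpow_nonneg (by linarith) _))
    _ = z2 * ((z1 + 1/10) ^ ((11:ℝ)/12) * (11/10 - z1) ^ ((1:ℝ)/12)) := by ring

lemma star₀ {A B : ℝ} (hA : 0 ≤ A) (hAB : A ≤ B) (hB : B ≤ 1) :
    (B - A) * (A / f₀ (1 - A)) ≤ f₀ A - f₀ B := by
  rcases eq_or_lt_of_le hAB with rfl | hlt
  · simp
  · obtain ⟨c, hc, hslope⟩ := exists_hasDerivAt_eq_slope f₀ (fun x => -(x / f₀ (1 - x))) hlt
      f₀_cont.continuousOn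
      (fun x hx => f₀_hasDeriv (lt_of_le_of_lt hA hx.1) (lt_of_lt_of_le hx.2 hB))
    have hmc : A / f₀ (1 - A) ≤ c / f₀ (1 - c) := hmono₀ hA hc.1.le (by linarith [hc.2])
    have h2 := hslope
    rw [eq_div_iff (by linarith : B - A ≠ 0)] at h2
    have key : f₀ A - f₀ B = c / f₀ (1 - c) * (B - A) := by linarith [h2]
    nlinarith [key, hmc, sub_pos.mpr hlt]

lemma f₀_zero_le : f₀ 0 ≤ 237/263 := by
  have e : ((11/10:ℝ)^(11:ℕ)) ^ ((1:ℝ)/12) = (11/10:ℝ) ^ ((11:ℝ)/12) := by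
    rw [← Real.rpow_natCast (11/10:ℝ) 11, ← Real.rpow_mul (by norm_num)]
    norm_num
  have h : f₀ 0 = ((11/10:ℝ)^(11:ℕ) * (1/10)) ^ ((1:ℝ)/12) := by
    rw [Real.mul_rpow (by positivity) (by norm_num), e]
    unfold f₀
    norm_num
  rw [h]
  have h2 : ((11/10:ℝ)^(11:ℕ) * (1/10)) ≤ (237/263:ℝ)^(12:ℕ) := by norm_num
  calc ((11/10:ℝ)^(11:ℕ) * (1/10)) ^ ((1:ℝ)/12)
      ≤ ((237/263:ℝ)^(12:ℕ)) ^ ((1:ℝ)/12) := Real.rpow_le_rpow (by positivity) h2 (by norm_num)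
    _ = 237/263 := by
        rw [← Real.rpow_natCast (237/263:ℝ) 12, ← Real.rpow_mul (by norm_num)]
        norm_num

lemma waterLevel_spec {ι : Type*} (f : ℝ → ℝ) (hfc : Continuous f) (hf0 : 0 < f 0)
    (S : Finset ι) (y : ι → ℝ) (hy : ∀ u ∈ S, 0 ≤ y u) :
    waterLevel f S y ∈ Set.Icc (0:ℝ) 1 ∧
    (∑ u ∈ S, max (waterLevel f S y - y u) 0) ≤ f (waterLevel f S y) := by
  have hgc : Continuous (fun t : ℝ => ∑ u ∈ S, max (t - y u) 0) :=
    continuous_finset_sum _ fun u _ => ((continuous_id.sub continuous_const).max continuous_const)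
  have hclosed : IsClosed {t ∈ Set.Icc (0:ℝ) 1 | ∑ u ∈ S, max (t - y u) 0 ≤ f t} :=
    isClosed_Icc.inter (isClosed_le hgc hfc)
  have hsub : {t ∈ Set.Icc (0:ℝ) 1 | ∑ u ∈ S, max (t - y u) 0 ≤ f t} ⊆ Set.Icc 0 1 :=
    fun t ht => ht.1
  have hcomp : IsCompact {t ∈ Set.Icc (0:ℝ) 1 | ∑ u ∈ S, max (t - y u) 0 ≤ f t} :=
    isCompact_Icc.of_isClosed_subset hclosed hsub
  have hne : {t ∈ Set.Icc (0:ℝ) 1 | ∑ u ∈ S, max (t - y u) 0 ≤ f t}.Nonempty := by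
    refine ⟨0, ⟨le_refl 0, zero_le_one⟩, ?_⟩
    have : ∑ u ∈ S, max ((0:ℝ) - y u) 0 = 0 :=
      Finset.sum_eq_zero fun u hu => max_eq_right (by linarith [hy u hu])
    rw [this]; exact hf0.le
  have := hcomp.sSup_mem hne
  exact ⟨this.1, this.2⟩

lemma waterLevel_eq {ι : Type*} (f : ℝ → ℝ) (hfc : Continuous f) (hf0 : 0 < f 0)
    (S : Finset ι) (y : ι → ℝ) (hy : ∀ u ∈ S, 0 ≤ y u)
    (hlt : waterLevel f S y < 1) :
    f (waterLevel f S y) ≤ ∑ u ∈ S, max (waterLevel f S y - y u) 0 := by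
  set w := waterLevel f S y with hw
  have hgc : Continuous (fun t : ℝ => ∑ u ∈ S, max (t - y u) 0) :=
    continuous_finset_sum _ fun u _ => ((continuous_id.sub continuous_const).max continuous_const)
  have hbdd : BddAbove {t ∈ Set.Icc (0:ℝ) 1 | ∑ u ∈ S, max (t - y u) 0 ≤ f t} :=
    ⟨1, fun t ht => ht.1.2⟩
  have hub : ∀ t ∈ {t ∈ Set.Icc (0:ℝ) 1 | ∑ u ∈ S, max (t - y u) 0 ≤ f t}, t ≤ w :=
    fun t ht => le_csSup hbdd ht
  have hspec := waterLevel_spec f hfc hf0 S y hy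
  have hev : ∀ t ∈ Set.Ioc w 1, f t ≤ ∑ u ∈ S, max (t - y u) 0 := by
    intro t ht
    by_contra hcon
    push_neg at hcon
    have : t ≤ w := hub t ⟨⟨le_trans hspec.1.1 ht.1.le, ht.2⟩, hcon.le⟩
    exact absurd this (not_le.mpr ht.1)
  have htend : Filter.Tendsto (fun t => ∑ u ∈ S, max (t - y u) 0 - f t) (nhdsWithin w (Set.Ioi w))
      (nhds (∑ u ∈ S, max (w - y u) 0 - f w)) :=
    ((hgc.sub hfc).continuousAt).continuousWithinAt
  have hmem : Set.Ioc w 1 ∈ nhdsWithin w (Set.Ioi w) := Ioc_mem_nhdsGT_of_mem ⟨le_refl w, hlt⟩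
  have : 0 ≤ ∑ u ∈ S, max (w - y u) 0 - f w :=
    ge_of_tendsto htend (Filter.eventually_iff_exists_mem.mpr
      ⟨Set.Ioc w 1, hmem, fun t ht => by linarith [hev t ht]⟩)
  linarith

noncomputable def G₀ (t : ℝ) : ℝ := t + f₀ (1 - t)

namespace PD
variable {n : ℕ} (E : Fin n → Fin n → Bool)

lemma gp_succ (i : ℕ) (h : i < n) (v : Fin n) :
    greedyPotential f₀ E (i+1) v =
      if v = (⟨i, h⟩ : Fin n) then 1 - stepLevel f₀ E ⟨i, h⟩
      else if v ∈ neighborsBefore E ⟨i, h⟩ then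
        max (greedyPotential f₀ E i v) (stepLevel f₀ E ⟨i, h⟩)
      else greedyPotential f₀ E i v := by
  simp only [greedyPotential, h, dif_pos]
  rfl

lemma gp_bounds : ∀ (i : ℕ) (v : Fin n),
    0 ≤ greedyPotential f₀ E i v ∧ greedyPotential f₀ E i v ≤ 1 := by
  intro i
  induction i with
  | zero => intro v; simp [greedyPotential]
  | succ i ih =>
    intro v
    by_cases h : i < n
    · have hw := (waterLevel_spec f₀ f₀_cont (f₀_pos le_rfl zero_le_one)
        (neighborsBefore E ⟨i, h⟩) (greedyPotential f₀ E i) (fun u _ => (ih u).1)).1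
      have hw0 : 0 ≤ stepLevel f₀ E ⟨i, h⟩ := hw.1
      have hw1 : stepLevel f₀ E ⟨i, h⟩ ≤ 1 := hw.2
      rw [gp_succ E i h v]
      split_ifs with h1 h2
      · constructor <;> linarith
      · exact ⟨le_trans (ih v).1 (le_max_left _ _), max_le (ih v).2 hw1⟩
      · exact ih v
    · simp only [greedyPotential, h, dif_neg, not_false_iff]
      exact ih v

lemma step_spec (i : Fin n) :
    0 ≤ stepLevel f₀ E i ∧ stepLevel f₀ E i ≤ 1 ∧
    (∑ u ∈ neighborsBefore E i, max (stepLevel f₀ E i - greedyPotential f₀ E i.val u) 0)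
      ≤ f₀ (stepLevel f₀ E i) := by
  have hw := waterLevel_spec f₀ f₀_cont (f₀_pos le_rfl zero_le_one)
    (neighborsBefore E i) (greedyPotential f₀ E i.val) (fun u _ => (gp_bounds E i.val u).1)
  exact ⟨hw.1.1, hw.1.2, hw.2⟩

lemma step_full (i : Fin n) (hlt : stepLevel f₀ E i < 1) :
    f₀ (stepLevel f₀ E i) ≤
      ∑ u ∈ neighborsBefore E i, max (stepLevel f₀ E i - greedyPotential f₀ E i.val u) 0 :=
  waterLevel_eq f₀ f₀_cont (f₀_pos le_rfl zero_le_one) _ _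
    (fun u _ => (gp_bounds E i.val u).1) hlt

lemma gp_unprocessed : ∀ (i : ℕ) (v : Fin n), i ≤ v.val → greedyPotential f₀ E i v = 0 := by
  intro i
  induction i with
  | zero => intro v _; rfl
  | succ i ih =>
    intro v hv
    by_cases h : i < n
    · rw [gp_succ E i h v]
      have h1 : v ≠ (⟨i, h⟩ : Fin n) := by
        intro heq; rw [heq] at hv; simp at hv
      have h2 : v ∉ neighborsBefore E ⟨i, h⟩ := by
        simp only [neighborsBefore, mem_filter, mem_univ, true_and, Fin.lt_def]
        intro hcon
        omega
      rw [if_neg h1, if_neg h2]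
      exact ih v (by omega)
    · simp only [greedyPotential, h, dif_neg, not_false_iff]
      exact ih v (by omega)

lemma gp_mono_step (i : ℕ) (v : Fin n) :
    greedyPotential f₀ E i v ≤ greedyPotential f₀ E (i+1) v := by
  by_cases h : i < n
  · rw [gp_succ E i h v]
    split_ifs with h1 h2
    · rw [h1, gp_unprocessed E i ⟨i, h⟩ (le_refl i)]
      linarith [(step_spec E ⟨i, h⟩).2.1]
    · exact le_max_left _ _
    · exact le_refl _
  · simp only [greedyPotential, h, dif_neg, not_false_iff]
    exact le_refl _

lemma gp_mono (i j : ℕ) (hij : i ≤ j) (v : Fin n) :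
    greedyPotential f₀ E i v ≤ greedyPotential f₀ E j v := by
  induction j, hij using Nat.le_induction with
  | base => exact le_refl _
  | succ j hj ih => exact le_trans ih (gp_mono_step E j v)

lemma gp_arrival (v : Fin n) :
    greedyPotential f₀ E (v.val + 1) v = 1 - stepLevel f₀ E v := by
  rw [gp_succ E v.val v.isLt v]
  have : v = (⟨v.val, v.isLt⟩ : Fin n) := by simp [Fin.ext_iff]
  rw [if_pos this]

lemma gp_neighbor_raise (i : Fin n) (j : Fin n) (hj : j ∈ neighborsBefore E i) :
    stepLevel f₀ E i ≤ greedyPotential f₀ E (i.val + 1) j := by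
  have h : i.val < n := i.isLt
  rw [gp_succ E i.val h j]
  have hji : (⟨i.val, h⟩ : Fin n) = i := by simp [Fin.ext_iff]
  rw [hji]
  have hne : j ≠ i := by
    intro heq
    simp only [neighborsBefore, mem_filter] at hj
    exact absurd (heq ▸ hj.2.1) (lt_irrefl i)
  rw [if_neg hne, if_pos hj]
  exact le_max_right _ _

lemma gp_untouched (i : ℕ) (h : i < n) (v : Fin n) (hv1 : v ≠ (⟨i, h⟩ : Fin n))
    (hv2 : v ∉ neighborsBefore E ⟨i, h⟩) :
    greedyPotential f₀ E (i+1) v = greedyPotential f₀ E i v := by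
  rw [gp_succ E i h v, if_neg hv1, if_neg hv2]

lemma G_step {y w : ℝ} (hy0 : 0 ≤ y) (hy1 : y ≤ 1) (hw0 : 0 ≤ w) (hw1 : w ≤ 1) :
    max (w - y) 0 * (1 + (1 - w) / f₀ w) ≤ G₀ (max y w) - G₀ y := by
  rcases le_total w y with h | h
  · rw [max_eq_right (by linarith : w - y ≤ 0), max_eq_left h]
    simp
  · rw [max_eq_left (by linarith : (0:ℝ) ≤ w - y), max_eq_right h]
    have hstar := star₀ (A := 1 - w) (B := 1 - y) (by linarith) (by linarith) (by linarith)
    have hrw : (1:ℝ) - (1 - w) = w := by ring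
    rw [hrw] at hstar
    unfold G₀
    have hfw : 0 < f₀ w := f₀_pos hw0 hw1
    have expand : (w - y) * (1 + (1 - w) / f₀ w) =
        (w - y) + (w - y) * ((1 - w) / f₀ w) := by ring
    rw [expand]
    have e2 : (1 - y - (1 - w)) * ((1 - w) / f₀ w) = (w - y) * ((1 - w) / f₀ w) := by ring
    rw [e2] at hstar
    linarith

lemma G_mono {y z : ℝ} (hy : 0 ≤ y) (hyz : y ≤ z) (hz : z ≤ 1) : G₀ y ≤ G₀ z := by
  have hstar := star₀ (A := 1 - z) (B := 1 - y) (by linarith) (by linarith) (by linarith)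
  have hrw : (1:ℝ) - (1 - z) = z := by ring
  rw [hrw] at hstar
  have h1 : 0 ≤ (1 - y - (1 - z)) * ((1 - z) / f₀ z) :=
    mul_nonneg (by linarith) (div_nonneg (by linarith) (f₀_pos (by linarith) hz).le)
  unfold G₀
  linarith

end PD

namespace PD2
open PD
variable {n : ℕ} (E : Fin n → Fin n → Bool)

noncomputable def β₀ : ℝ := 1 + f₀ 0

lemma β₀_pos : (0:ℝ) < β₀ := by
  have := f₀_pos (le_refl (0:ℝ)) zero_le_one
  unfold β₀; linarith

lemma g_nonneg {w : ℝ} (h0 : 0 ≤ w) (h1 : w ≤ 1) : 0 ≤ 1 + (1 - w) / f₀ w := by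
  have := div_nonneg (by linarith : (0:ℝ) ≤ 1 - w) (f₀_pos h0 h1).le
  linarith

lemma sum_in (i : Fin n) :
    ∑ j, pdEdge f₀ β₀ E j i =
      (∑ u ∈ neighborsBefore E i,
          max (stepLevel f₀ E i - greedyPotential f₀ E i.val u) 0) / β₀ *
        (1 + (1 - stepLevel f₀ E i) / f₀ (stepLevel f₀ E i)) := by
  unfold pdEdge
  rw [← Finset.sum_filter]
  rw [show (Finset.univ.filter fun j : Fin n => j < i ∧ E j i = true) = neighborsBefore E i
    from rfl]
  rw [← Finset.sum_mul, ← Finset.sum_div]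

lemma sum_in_le (i : Fin n) :
    β₀ * ∑ j, pdEdge f₀ β₀ E j i ≤
      f₀ (stepLevel f₀ E i) + (1 - stepLevel f₀ E i) := by
  obtain ⟨hw0, hw1, hS⟩ := step_spec E i
  have hβ := β₀_pos
  have hg := g_nonneg hw0 hw1
  have hfw := f₀_pos hw0 hw1
  rw [sum_in]
  have e : β₀ * ((∑ u ∈ neighborsBefore E i,
      max (stepLevel f₀ E i - greedyPotential f₀ E i.val u) 0) / β₀ *
        (1 + (1 - stepLevel f₀ E i) / f₀ (stepLevel f₀ E i))) =
      (∑ u ∈ neighborsBefore E i,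
      max (stepLevel f₀ E i - greedyPotential f₀ E i.val u) 0) *
        (1 + (1 - stepLevel f₀ E i) / f₀ (stepLevel f₀ E i)) := by
    field_simp
  rw [e]
  calc (∑ u ∈ neighborsBefore E i,
      max (stepLevel f₀ E i - greedyPotential f₀ E i.val u) 0) *
        (1 + (1 - stepLevel f₀ E i) / f₀ (stepLevel f₀ E i))
      ≤ f₀ (stepLevel f₀ E i) * (1 + (1 - stepLevel f₀ E i) / f₀ (stepLevel f₀ E i)) :=
        mul_le_mul_of_nonneg_right hS hg
    _ = f₀ (stepLevel f₀ E i) + (1 - stepLevel f₀ E i) := by field_simp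

lemma sum_in_ge (i : Fin n) :
    (∑ u ∈ neighborsBefore E i,
        max (stepLevel f₀ E i - greedyPotential f₀ E i.val u) 0) +
      (1 - stepLevel f₀ E i) ≤ β₀ * ∑ j, pdEdge f₀ β₀ E j i := by
  obtain ⟨hw0, hw1, hS⟩ := step_spec E i
  have hβ := β₀_pos
  have hfw := f₀_pos hw0 hw1
  rw [sum_in]
  have e : β₀ * ((∑ u ∈ neighborsBefore E i,
      max (stepLevel f₀ E i - greedyPotential f₀ E i.val u) 0) / β₀ *
        (1 + (1 - stepLevel f₀ E i) / f₀ (stepLevel f₀ E i))) =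
      (∑ u ∈ neighborsBefore E i,
      max (stepLevel f₀ E i - greedyPotential f₀ E i.val u) 0) *
        (1 + (1 - stepLevel f₀ E i) / f₀ (stepLevel f₀ E i)) := by
    field_simp
  rw [e]
  rcases lt_or_eq_of_le hw1 with hlt | heq
  · have hfull := step_full E i hlt
    have hnn : 0 ≤ ∑ u ∈ neighborsBefore E i,
        max (stepLevel f₀ E i - greedyPotential f₀ E i.val u) 0 :=
      Finset.sum_nonneg fun u _ => le_max_right _ _
    have key : 1 - stepLevel f₀ E i ≤
        (∑ u ∈ neighborsBefore E i,
          max (stepLevel f₀ E i - greedyPotential f₀ E i.val u) 0) *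
          ((1 - stepLevel f₀ E i) / f₀ (stepLevel f₀ E i)) := by
      calc 1 - stepLevel f₀ E i
          = f₀ (stepLevel f₀ E i) * ((1 - stepLevel f₀ E i) / f₀ (stepLevel f₀ E i)) := by
            field_simp
        _ ≤ _ := mul_le_mul_of_nonneg_right hfull
            (div_nonneg (by linarith) hfw.le)
    nlinarith [key]
  · rw [heq]
    simp

lemma filter_succ (m : ℕ) (hm : m < n) :
    (Finset.univ.filter fun u : Fin n => u.val < m + 1) =
      insert (⟨m, hm⟩ : Fin n) (Finset.univ.filter fun u : Fin n => u.val < m) := by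
  ext u
  simp only [mem_filter, mem_univ, true_and, Finset.mem_insert, Fin.ext_iff]
  omega

lemma sum_out_le (v : Fin n) (m : ℕ) (hm : v.val + 1 ≤ m) (hmn : m ≤ n) :
    β₀ * ∑ u ∈ Finset.univ.filter (fun u : Fin n => u.val < m), pdEdge f₀ β₀ E v u ≤
      G₀ (greedyPotential f₀ E m v) - G₀ (greedyPotential f₀ E (v.val + 1) v) := by
  induction m, hm using Nat.le_induction with
  | base =>
    have hz : ∑ u ∈ Finset.univ.filter (fun u : Fin n => u.val < v.val + 1),
        pdEdge f₀ β₀ E v u = 0 := by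
      apply Finset.sum_eq_zero
      intro u hu
      simp only [mem_filter, mem_univ, true_and] at hu
      unfold pdEdge
      rw [if_neg]
      rintro ⟨hlt, -⟩
      rw [Fin.lt_def] at hlt
      omega
    rw [hz]
    simp
  | succ m hm ih =>
    have hmlt : m < n := by omega
    have ih' := ih (by omega)
    rw [filter_succ m hmlt, Finset.sum_insert (by simp)]
    set u : Fin n := ⟨m, hmlt⟩ with hu
    have hvne : v ≠ u := by
      intro h; rw [h] at hm; simp [hu] at hm
    by_cases hcase : v < u ∧ E v u = true
    · have hmem : v ∈ neighborsBefore E u := by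
        simp only [neighborsBefore, mem_filter, mem_univ, true_and]
        exact hcase
      have hYsucc : greedyPotential f₀ E (m + 1) v =
          max (greedyPotential f₀ E m v) (stepLevel f₀ E u) := by
        rw [gp_succ E m hmlt v, if_neg hvne, if_pos hmem]
      have hterm : pdEdge f₀ β₀ E v u =
          (max (stepLevel f₀ E u - greedyPotential f₀ E m v) 0 / β₀) *
            (1 + (1 - stepLevel f₀ E u) / f₀ (stepLevel f₀ E u)) := by
        unfold pdEdge
        rw [if_pos hcase]
      obtain ⟨hw0, hw1, -⟩ := step_spec E u
      obtain ⟨hy0, hy1⟩ := gp_bounds E m v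
      have hGstep := G_step (y := greedyPotential f₀ E m v) (w := stepLevel f₀ E u)
        hy0 hy1 hw0 hw1
      have hβ := β₀_pos
      have hterm2 : β₀ * pdEdge f₀ β₀ E v u =
          max (stepLevel f₀ E u - greedyPotential f₀ E m v) 0 *
            (1 + (1 - stepLevel f₀ E u) / f₀ (stepLevel f₀ E u)) := by
        rw [hterm]; field_simp
      have : β₀ * (pdEdge f₀ β₀ E v u +
          ∑ u' ∈ Finset.univ.filter (fun u' : Fin n => u'.val < m), pdEdge f₀ β₀ E v u') =
          β₀ * pdEdge f₀ β₀ E v u +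
          β₀ * ∑ u' ∈ Finset.univ.filter (fun u' : Fin n => u'.val < m), pdEdge f₀ β₀ E v u' := by
        ring
      rw [this, hterm2, hYsucc]
      linarith [hGstep, ih']
    · have hterm : pdEdge f₀ β₀ E v u = 0 := by
        unfold pdEdge; rw [if_neg hcase]
      have hnot : v ∉ neighborsBefore E u := by
        simp only [neighborsBefore, mem_filter, mem_univ, true_and]
        exact hcase
      have hYsucc : greedyPotential f₀ E (m + 1) v = greedyPotential f₀ E m v :=
        gp_untouched E m hmlt v hvne hnot
      rw [hterm, hYsucc]
      simpa using ih'

lemma filter_all : (Finset.univ.filter fun u : Fin n => u.val < n) = Finset.univ := by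
  apply Finset.filter_true_of_mem
  intro u _
  exact u.isLt

lemma vertex_feasible (v : Fin n) :
    ∑ u, (pdEdge f₀ β₀ E u v + pdEdge f₀ β₀ E v u) ≤ 1 := by
  have hβ := β₀_pos
  rw [Finset.sum_add_distrib]
  have h1 := sum_in_le E v
  have h2 := sum_out_le E v n v.isLt (le_refl n)
  rw [filter_all] at h2
  rw [gp_arrival E v] at h2
  obtain ⟨hw0, hw1, -⟩ := step_spec E v
  obtain ⟨hY0, hY1⟩ := gp_bounds E n v
  have h3 : G₀ (greedyPotential f₀ E n v) ≤ G₀ 1 := G_mono hY0 hY1 (le_refl 1)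
  have hG1 : G₀ (1:ℝ) = 1 + f₀ 0 := by unfold G₀; norm_num
  have hGw : G₀ (1 - stepLevel f₀ E v) =
      1 - stepLevel f₀ E v + f₀ (stepLevel f₀ E v) := by
    unfold G₀
    rw [show (1:ℝ) - (1 - stepLevel f₀ E v) = stepLevel f₀ E v from by ring]
  have hβeq : β₀ = 1 + f₀ 0 := rfl
  have key : β₀ * (∑ u, pdEdge f₀ β₀ E u v + ∑ u, pdEdge f₀ β₀ E v u) ≤ β₀ := by
    have := mul_add β₀ (∑ u, pdEdge f₀ β₀ E u v) (∑ u, pdEdge f₀ β₀ E v u)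
    rw [this]
    linarith [h1, h2, h3]
  nlinarith [key]

lemma sum_potential_le (m : ℕ) (hm : m ≤ n) :
    ∑ v, greedyPotential f₀ E m v ≤
      β₀ * ∑ i ∈ Finset.univ.filter (fun i : Fin n => i.val < m), ∑ j, pdEdge f₀ β₀ E j i := by
  induction m with
  | zero =>
    simp [greedyPotential]
  | succ m ih =>
    have hmlt : m < n := by omega
    have ih' := ih (by omega)
    set u : Fin n := ⟨m, hmlt⟩ with hu
    have hstep : ∑ v, greedyPotential f₀ E (m+1) v - ∑ v, greedyPotential f₀ E m v =
        (∑ j ∈ neighborsBefore E u,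
          max (stepLevel f₀ E u - greedyPotential f₀ E m j) 0) + (1 - stepLevel f₀ E u) := by
      rw [← Finset.sum_sub_distrib]
      have hzero : ∀ x ∈ Finset.univ, x ∉ insert u (neighborsBefore E u) →
          greedyPotential f₀ E (m+1) x - greedyPotential f₀ E m x = 0 := by
        intro x _ hx
        simp only [Finset.mem_insert, not_or] at hx
        rw [gp_untouched E m hmlt x hx.1 hx.2]
        ring
      rw [← Finset.sum_subset (Finset.subset_univ (insert u (neighborsBefore E u))) hzero]
      have hunotmem : u ∉ neighborsBefore E u := by
        simp only [neighborsBefore, mem_filter, mem_univ, true_and]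
        rintro ⟨hlt, -⟩
        exact absurd hlt (lt_irrefl u)
      rw [Finset.sum_insert hunotmem]
      have harr : greedyPotential f₀ E (m+1) u - greedyPotential f₀ E m u =
          1 - stepLevel f₀ E u := by
        have h1 : greedyPotential f₀ E (m+1) u = 1 - stepLevel f₀ E u := gp_arrival E u
        have h2 : greedyPotential f₀ E m u = 0 := gp_unprocessed E m u (le_refl m)
        rw [h1, h2]; ring
      have hnb : ∀ j ∈ neighborsBefore E u,
          greedyPotential f₀ E (m+1) j - greedyPotential f₀ E m j =
            max (stepLevel f₀ E u - greedyPotential f₀ E m j) 0 := by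
        intro j hj
        have hjne : j ≠ u := by
          intro h
          rw [h] at hj
          simp only [neighborsBefore, mem_filter, mem_univ, true_and] at hj
          exact absurd hj.1 (lt_irrefl u)
        rw [gp_succ E m hmlt j, if_neg hjne, if_pos hj]
        rcases le_total (stepLevel f₀ E u) (greedyPotential f₀ E m j) with h | h
        · rw [max_eq_left h, max_eq_right (by linarith : stepLevel f₀ E u - greedyPotential f₀ E m j ≤ 0)]
          ring
        · rw [max_eq_right h, max_eq_left (by linarith : (0:ℝ) ≤ stepLevel f₀ E u - greedyPotential f₀ E m j)]
      rw [Finset.sum_congr rfl hnb, harr]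
      ring
    have hge := sum_in_ge E u
    rw [filter_succ m hmlt, Finset.sum_insert (by simp), mul_add]
    have : greedyPotential f₀ E m = greedyPotential f₀ E u.val := rfl
    rw [← this] at hge
    linarith [hstep, hge, ih']

lemma dual_feasible (j i : Fin n) (hj : j < i) (hE : E j i = true) :
    1 ≤ greedyPotential f₀ E n j + greedyPotential f₀ E n i := by
  have hmem : j ∈ neighborsBefore E i := by
    simp only [neighborsBefore, mem_filter, mem_univ, true_and]
    exact ⟨hj, hE⟩
  have h1 := gp_neighbor_raise E i j hmem
  have h2 := gp_arrival E i
  have h3 := gp_mono E (i.val + 1) n i.isLt j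
  have h4 := gp_mono E (i.val + 1) n i.isLt i
  linarith

end PD2

/-- `PrimalDual` with allocation function `f_{6/5}` and `β = 1 + f_{6/5}(0)` is
`0.526`-competitive for online fractional matching in general graphs: the
produced edge values form a fractional matching whose size is at least
`0.526` times the size of any fractional matching. -/
theorem primalDual_matching_competitive (k : ℝ) (hk : k = 6 / 5) (f : ℝ → ℝ)
    (hf : ∀ z, f z = ((1 + k) / 2 - z) ^ ((1 + k) / (2 * k)) *
                     (z + (k - 1) / 2) ^ ((k - 1) / (2 * k)))
    (β : ℝ) (hβ : β = 1 + f 0)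
    (n : ℕ) (E : Fin n → Fin n → Bool)
    (hsymm : ∀ i j, E i j = E j i) (hloop : ∀ i, E i i = false)
    (x : Fin n → Fin n → ℝ) (hx : x = pdEdge f β E) :
    (∀ j i, 0 ≤ x j i) ∧
    (∀ v, ∑ u, (x u v + x v u) ≤ 1) ∧
    (∀ xstar : Fin n → Fin n → ℝ,
      (∀ j i, 0 ≤ xstar j i) →
      (∀ j i, ¬(j < i ∧ E j i = true) → xstar j i = 0) →
      (∀ v, ∑ u, (xstar u v + xstar v u) ≤ 1) →
      0.526 * ∑ j, ∑ i, xstar j i ≤ ∑ j, ∑ i, x j i) := by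
  subst hk
  have hff : f = f₀ := by
    funext z
    rw [hf z]
    unfold f₀
    norm_num
  subst hff
  have hββ : β = PD2.β₀ := hβ
  subst hββ
  subst hx
  have hnonneg : ∀ j i, 0 ≤ pdEdge f₀ PD2.β₀ E j i := by
    intro j i
    unfold pdEdge
    split_ifs with hc
    · obtain ⟨hw0, hw1, -⟩ := PD.step_spec E i
      exact mul_nonneg (div_nonneg (le_max_right _ _) PD2.β₀_pos.le) (PD2.g_nonneg hw0 hw1)
    · exact le_refl 0
  refine ⟨hnonneg, PD2.vertex_feasible E, ?_⟩
  intro xstar hpos hsupp hmatch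
  have hY0 : ∀ v, 0 ≤ greedyPotential f₀ E n v := fun v => (PD.gp_bounds E n v).1
  have h1 : ∑ j, ∑ i, xstar j i ≤ ∑ v, greedyPotential f₀ E n v := by
    have step1 : ∑ j, ∑ i, xstar j i ≤
        ∑ j, ∑ i, xstar j i * (greedyPotential f₀ E n j + greedyPotential f₀ E n i) := by
      apply Finset.sum_le_sum; intro j _
      apply Finset.sum_le_sum; intro i _
      by_cases hc : j < i ∧ E j i = true
      · have hd := PD2.dual_feasible E j i hc.1 hc.2
        nlinarith [hpos j i]
      · rw [hsupp j i hc]; simp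
    have step2 : ∑ j, ∑ i, xstar j i * (greedyPotential f₀ E n j + greedyPotential f₀ E n i)
        = ∑ v, greedyPotential f₀ E n v * ((∑ i, xstar v i) + (∑ u, xstar u v)) := by
      have e0 : ∑ j, ∑ i, xstar j i * (greedyPotential f₀ E n j + greedyPotential f₀ E n i)
          = (∑ j, ∑ i, xstar j i * greedyPotential f₀ E n j)
            + ∑ j, ∑ i, xstar j i * greedyPotential f₀ E n i := by
        rw [← Finset.sum_add_distrib]
        apply Finset.sum_congr rfl; intro j _
        rw [← Finset.sum_add_distrib]
        apply Finset.sum_congr rfl; intro i _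
        ring
      have e1 : ∑ j, ∑ i : Fin n, xstar j i * greedyPotential f₀ E n j
          = ∑ v : Fin n, greedyPotential f₀ E n v * ∑ i, xstar v i := by
        apply Finset.sum_congr rfl; intro j _
        rw [Finset.mul_sum]
        apply Finset.sum_congr rfl; intro i _; ring
      have e2 : ∑ j, ∑ i : Fin n, xstar j i * greedyPotential f₀ E n i
          = ∑ v : Fin n, greedyPotential f₀ E n v * ∑ u, xstar u v := by
        rw [Finset.sum_comm]
        apply Finset.sum_congr rfl; intro i _
        rw [Finset.mul_sum]
        apply Finset.sum_congr rfl; intro j _; ring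
      rw [e0, e1, e2, ← Finset.sum_add_distrib]
      apply Finset.sum_congr rfl; intro v _; ring
    have step3 : ∑ v, greedyPotential f₀ E n v * ((∑ i, xstar v i) + (∑ u, xstar u v))
        ≤ ∑ v, greedyPotential f₀ E n v := by
      apply Finset.sum_le_sum; intro v _
      have hs : (∑ i, xstar v i) + (∑ u, xstar u v) ≤ 1 := by
        have := hmatch v
        rw [Finset.sum_add_distrib] at this
        linarith
      nlinarith [hY0 v, hs]
    linarith [step1, step2.le, step2.ge, step3]
  have h2 := PD2.sum_potential_le E n (le_refl n)
  rw [PD2.filter_all] at h2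
  have hswap : ∑ j, ∑ i, pdEdge f₀ PD2.β₀ E j i = ∑ i, ∑ j, pdEdge f₀ PD2.β₀ E j i :=
    Finset.sum_comm
  have hxnn : 0 ≤ ∑ i, ∑ j, pdEdge f₀ PD2.β₀ E j i :=
    Finset.sum_nonneg fun i _ => Finset.sum_nonneg fun j _ => hnonneg j i
  have hβle : (0.526:ℝ) * PD2.β₀ ≤ 1 := by
    have hz := f₀_zero_le
    show (0.526:ℝ) * (1 + f₀ 0) ≤ 1
    nlinarith [hz]
  calc (0.526:ℝ) * ∑ j, ∑ i, xstar j i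
      ≤ 0.526 * ∑ v, greedyPotential f₀ E n v := by
        apply mul_le_mul_of_nonneg_left h1 (by norm_num)
    _ ≤ 0.526 * (PD2.β₀ * ∑ i, ∑ j, pdEdge f₀ PD2.β₀ E j i) := by
        apply mul_le_mul_of_nonneg_left h2 (by norm_num)
    _ = (0.526 * PD2.β₀) * ∑ i, ∑ j, pdEdge f₀ PD2.β₀ E j i := by ring
    _ ≤ 1 * ∑ i, ∑ j, pdEdge f₀ PD2.β₀ E j i := mul_le_mul_of_nonneg_right hβle hxnn
    _ = ∑ j, ∑ i, pdEdge f₀ PD2.β₀ E j i := by rw [one_mul, ← hswap]
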